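/- Let A be an m×n matrix of rank m (m ≤ n) with entries in F[x], where F is a field, and let d(x) be the greatest common divisor of all m×m minors of A. Then A admits a factorization A = L·U with L an m×m matrix over F[x] satisfying det L = d(x) (up to a unit), and U an m×n matrix over F[x]. -/

import Mathlib

open Matrix

/-- baby Cauchy–Binet: anything dividing all maximal minors of `A` divides `det (A * V)`. -/
lemma dvd_det_mul {R : Type*} [CommRing R] {m n : ℕ} (A : Matrix (Fin m) (Fin n) R)
    (d : R) (hd : ∀ g : Fin m → Fin n, Function.Injective g → d ∣ (A.submatrix id g).det)
    (V : Matrix (Fin n) (Fin m) R) : d ∣ (A * V).det := by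
  rw [← Matrix.det_transpose, Matrix.transpose_mul]
  have hM : (Vᵀ * Aᵀ) = Matrix.of fun j => ∑ k, V k j • Aᵀ k := by
    ext j i
    simp [Matrix.mul_apply, mul_comm]
  rw [hM]
  have hdet : (Matrix.of fun j => ∑ k, V k j • Aᵀ k).det
      = (Matrix.detRowAlternating : (Fin m → R) [⋀^Fin m]→ₗ[R] R)
          (fun j => ∑ k, V k j • Aᵀ k) := rfl
  rw [hdet]
  have := MultilinearMap.map_sum
    ((Matrix.detRowAlternating : (Fin m → R) [⋀^Fin m]→ₗ[R] R).toMultilinearMap)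
    (g := fun j k => V k j • Aᵀ k)
  rw [show ((Matrix.detRowAlternating : (Fin m → R) [⋀^Fin m]→ₗ[R] R)
      (fun j => ∑ k, V k j • Aᵀ k))
      = ((Matrix.detRowAlternating : (Fin m → R) [⋀^Fin m]→ₗ[R] R).toMultilinearMap)
      (fun j => ∑ k, V k j • Aᵀ k) from rfl, this]
  refine Finset.dvd_sum fun r _ => ?_
  rw [MultilinearMap.map_smul_univ]
  by_cases hr : Function.Injective r
  · have : ((Matrix.detRowAlternating : (Fin m → R) [⋀^Fin m]→ₗ[R] R).toMultilinearMap)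
        (fun j => Aᵀ (r j)) = (A.submatrix id r).det := by
      rw [show (A.submatrix id r).det = ((A.submatrix id r)ᵀ).det from (Matrix.det_transpose _).symm]
      rfl
    rw [this]
    exact Dvd.dvd.mul_left (hd r hr) _
  · obtain ⟨i, j, hij, hne⟩ : ∃ i j, r i = r j ∧ i ≠ j := by
      simp only [Function.Injective, not_forall] at hr
      obtain ⟨i, j, h1, h2⟩ := hr
      exact ⟨i, j, h1, h2⟩
    have hz : (Matrix.detRowAlternating : (Fin m → R) [⋀^Fin m]→ₗ[R] R) (fun i => Aᵀ (r i)) = 0 :=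
      AlternatingMap.map_eq_zero_of_eq _ _ (show Aᵀ (r i) = Aᵀ (r j) by rw [hij]) hne
    simp only [show ((Matrix.detRowAlternating : (Fin m → R) [⋀^Fin m]→ₗ[R] R).toMultilinearMap)
      (fun i => Aᵀ (r i)) = (0:R) from hz, smul_zero]
    exact dvd_zero d


theorem stmt_2 (F : Type*) [Field F] (m n : ℕ) (hmn : m ≤ n)
    (A : Matrix (Fin m) (Fin n) (Polynomial F))
    (hrank : A.rank = m)
    (d : Polynomial F)
    (hdvd : ∀ g : Fin m → Fin n, Function.Injective g →
      d ∣ (A.submatrix id g).det)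
    (hgcd : ∀ e : Polynomial F,
      (∀ g : Fin m → Fin n, Function.Injective g → e ∣ (A.submatrix id g).det)
      → e ∣ d) :
    ∃ (L : Matrix (Fin m) (Fin m) (Polynomial F))
      (U : Matrix (Fin m) (Fin n) (Polynomial F)),
      A = L * U ∧ Associated L.det d := by
  classical
  set N := LinearMap.range A.mulVecLin with hN
  have hfr : Module.finrank (Polynomial F) N = m := by
    unfold Matrix.rank at hrank; exact hrank
  let b : Module.Basis (Fin m) (Polynomial F) N := Module.finBasisOfFinrankEq (Polynomial F) N hfr
  let e : N ≃ₗ[Polynomial F] (Fin m → Polynomial F) := b.equivFun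
  let Ut : (Fin n → Polynomial F) →ₗ[Polynomial F] (Fin m → Polynomial F) :=
    (e : N →ₗ[Polynomial F] (Fin m → Polynomial F)) ∘ₗ A.mulVecLin.rangeRestrict
  let Lt : (Fin m → Polynomial F) →ₗ[Polynomial F] (Fin m → Polynomial F) :=
    N.subtype ∘ₗ (e.symm : (Fin m → Polynomial F) →ₗ[Polynomial F] N)
  have hcomp : Lt ∘ₗ Ut = A.mulVecLin := by
    apply LinearMap.ext; intro v
    simp [Lt, Ut]
  set L : Matrix (Fin m) (Fin m) (Polynomial F) := LinearMap.toMatrix' Lt with hL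
  set U : Matrix (Fin m) (Fin n) (Polynomial F) := LinearMap.toMatrix' Ut with hU
  have hA : A = L * U := by
    rw [hL, hU, ← LinearMap.toMatrix'_comp, hcomp, ← Matrix.toLin'_apply',
      LinearMap.toMatrix'_toLin']
  have hUsurj : Function.Surjective Ut :=
    e.surjective.comp (LinearMap.surjective_rangeRestrict _)
  obtain ⟨h, hh⟩ := Module.projective_lifting_property Ut LinearMap.id hUsurj
  set V : Matrix (Fin n) (Fin m) (Polynomial F) := LinearMap.toMatrix' h with hV
  have hUV : U * V = 1 := by
    rw [hU, hV, ← LinearMap.toMatrix'_comp, hh, LinearMap.toMatrix'_id]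
  have hLdvd : ∀ g : Fin m → Fin n, Function.Injective g → L.det ∣ (A.submatrix id g).det := by
    intro g hg
    have hsub : A.submatrix id g = L * (U.submatrix id g) := by
      rw [hA]; ext i j; simp [Matrix.mul_apply]
    rw [hsub, Matrix.det_mul]
    exact Dvd.intro _ rfl
  have hLd : L.det ∣ d := hgcd _ hLdvd
  have hLAV : L = A * V := by
    rw [hA, Matrix.mul_assoc, hUV, Matrix.mul_one]
  have hdL : d ∣ L.det := by
    rw [hLAV]
    exact dvd_det_mul A d hdvd V
  exact ⟨L, U, hA, associated_of_dvd_dvd hLd hdL⟩
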